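/- If m is even, then for every permutation s of the vertices of an m-edge-colored countable complete graph that induces the color permutation (1 2)(3 4)···(m−1 m) on colors, s cannot be an involution without fixed edges of fixed color; in particular, the extension Aut*(R_m) of Aut(R_m) by Sym(m) does not split for even m. -/
import Mathlib

/-- Key obstruction to splitting for even `m`: a fixed-point-free involution `π` of
the colours cannot be induced by any involution `s` of the vertices of an
`m`-edge-coloured countable complete graph.  (In particular the extension
`Aut*(R_m)` of `Aut(R_m)` by `Sym(m)` does not split when `m` is even.) -/
theorem no_involution_induces_fpf_colour_involution (m : ℕ) (hm : Even m)
    (V : Type*) [Countable V] [Infinite V]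
    (c : V → V → Fin m) (hsymm : ∀ u v : V, c u v = c v u)
    (π : Equiv.Perm (Fin m)) (hπ : π ^ 2 = 1) (hπfpf : ∀ i : Fin m, π i ≠ i)
    (s : Equiv.Perm V) (hs : s ^ 2 = 1)
    (hind : ∀ u v : V, u ≠ v → c (s u) (s v) = π (c u v)) :
    False := by
  have hss : ∀ v : V, s (s v) = v := by
    intro v
    have := congrFun (congrArg (fun g => g.toFun) hs) v
    simpa [pow_two] using this
  by_cases h : ∃ v : V, s v ≠ v
  · obtain ⟨v, hv⟩ := h
    have h1 := hind v (s v) (Ne.symm hv)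
    rw [hss] at h1
    rw [hsymm (s v) v] at h1
    exact hπfpf _ h1.symm
  · push_neg at h
    obtain ⟨u, v, huv⟩ := exists_pair_ne V
    have h1 := hind u v huv
    rw [h u, h v] at h1
    exact hπfpf _ h1.symm
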